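/- Assume u := 1 + b₂² + ⋯ + b_n² is a unit of ZMod N. Then the map ψ : L_N → (ZMod N)^{n−1} defined by ψ(x) = (x₂ + b₂x₁, x₃ + b₃x₁, …, x_n + b_n x₁) is an additive group isomorphism (a bijective additive homomorphism). -/

import Mathlib

/-- The finite SysNF lattice group
`L_N = {x ∈ (ZMod N)^(n+1) : x 0 = ∑_{i ≠ 0} b i * x i}`
as an additive subgroup of `(ZMod N)^(n+1)`. -/
def LN (n N : ℕ) (b : Fin (n + 1) → ZMod N) : AddSubgroup (Fin (n + 1) → ZMod N) where
  carrier := {x | x 0 = ∑ i ∈ Finset.univ.erase 0, b i * x i}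
  zero_mem' := by simp
  add_mem' := by
    intro x y hx hy
    simp only [Set.mem_setOf_eq, Pi.add_apply] at *
    rw [hx, hy, ← Finset.sum_add_distrib]
    exact Finset.sum_congr rfl fun i _ => (mul_add _ _ _).symm
  neg_mem' := by
    intro x hx
    simp only [Set.mem_setOf_eq, Pi.neg_apply] at *
    rw [hx, ← Finset.sum_neg_distrib]
    exact Finset.sum_congr rfl fun i _ => (mul_neg _ _).symm

/-- Assume `u = 1 + ∑_{i ≠ 0} (b i)²` is a unit of `ZMod N`.  Then the map
`ψ : L_N → (ZMod N)^{n-1}` (coordinates indexed by `{i : Fin (n+1) // i ≠ 0}`) given by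
`ψ(x) i = x i + b i * x 0` is an additive group isomorphism. -/
lemma mem_LN_iff (n N : ℕ) (b : Fin (n + 1) → ZMod N) (x : Fin (n + 1) → ZMod N) :
    x ∈ LN n N b ↔ x 0 = ∑ i ∈ Finset.univ.erase 0, b i * x i := Iff.rfl

lemma sum_erase_eq_sum_subtype {N : ℕ} {n : ℕ} (g : Fin (n + 1) → ZMod N) :
    ∑ i ∈ Finset.univ.erase 0, g i = ∑ i : {i : Fin (n + 1) // i ≠ 0}, g i.1 := by
  rw [Finset.sum_subtype]
  intro i; simp

theorem stmt_6 (n N : ℕ) (hN : 1 ≤ N) (b : Fin (n + 1) → ZMod N)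
    (hu : IsUnit (1 + ∑ i ∈ Finset.univ.erase 0, b i ^ 2)) :
    ∃ ψ : LN n N b ≃+ ({i : Fin (n + 1) // i ≠ 0} → ZMod N),
      ∀ (x : LN n N b) (i : {i : Fin (n + 1) // i ≠ 0}),
        ψ x i = (x : Fin (n + 1) → ZMod N) i.1 +
          b i.1 * (x : Fin (n + 1) → ZMod N) 0 := by
  set u : ZMod N := 1 + ∑ i ∈ Finset.univ.erase 0, b i ^ 2 with hudef
  obtain ⟨w, hw⟩ := hu
  have husub : u = 1 + ∑ i : {i : Fin (n + 1) // i ≠ 0}, b i.1 ^ 2 := by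
    rw [hudef, sum_erase_eq_sum_subtype]
  set f : LN n N b →+ ({i : Fin (n + 1) // i ≠ 0} → ZMod N) :=
  { toFun := fun x i => x.1 i.1 + b i.1 * x.1 0,
    map_zero' := by funext i; simp,
    map_add' := by intro x y; funext i; simp [mul_add]; ring } with hf
  have hinj : Function.Injective f := by
    rw [injective_iff_map_eq_zero]
    intro x hx
    have hx' : ∀ i : {i : Fin (n + 1) // i ≠ 0}, x.1 i.1 + b i.1 * x.1 0 = 0 :=
      fun i => congrFun hx i
    have hxi : ∀ i : {i : Fin (n + 1) // i ≠ 0}, x.1 i.1 = -(b i.1 * x.1 0) :=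
      fun i => eq_neg_of_add_eq_zero_left (hx' i)
    have hmem : x.1 0 = ∑ i ∈ Finset.univ.erase 0, b i * x.1 i := x.2
    have h0 : u * x.1 0 = 0 := by
      rw [sum_erase_eq_sum_subtype (fun i => b i * x.1 i)] at hmem
      have hsum : ∑ i : {i : Fin (n + 1) // i ≠ 0}, b i.1 * x.1 i.1 =
          ∑ i : {i : Fin (n + 1) // i ≠ 0}, (-(b i.1 ^ 2 * x.1 0)) :=
        Finset.sum_congr rfl fun i _ => by rw [hxi i]; ring
      rw [hsum, Finset.sum_neg_distrib, ← Finset.sum_mul] at hmem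
      rw [husub]
      linear_combination hmem
    have hx0 : x.1 0 = 0 := by
      have := congrArg (fun t => (↑w⁻¹ : ZMod N) * t) h0
      simp only [mul_zero, ← mul_assoc, ← hw, Units.inv_mul, one_mul] at this
      exact this
    have : x = 0 := by
      apply Subtype.ext
      funext j
      by_cases hj : j = 0
      · simpa [hj] using hx0
      · have := hxi ⟨j, hj⟩
        simp only [hx0, mul_zero, neg_zero] at this
        simpa using this
    exact this
  have hsurj : Function.Surjective f := by
    intro y
    set S : ZMod N := ∑ i : {i : Fin (n + 1) // i ≠ 0}, b i.1 * y i with hS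
    set c : ZMod N := (↑w⁻¹ : ZMod N) * S with hc
    have huc : u * c = S := by
      rw [hc, ← mul_assoc, ← hw, Units.mul_inv, one_mul]
    set z : Fin (n + 1) → ZMod N := fun j => if h : j = 0 then c else y ⟨j, h⟩ - b j * c
      with hz
    have hz0 : z 0 = c := by simp [hz]
    have hzi : ∀ (j : Fin (n + 1)) (h : j ≠ 0), z j = y ⟨j, h⟩ - b j * c := by
      intro j h; simp [hz, h]
    have hmem : z ∈ LN n N b := by
      show z 0 = ∑ i ∈ Finset.univ.erase 0, b i * z i
      rw [sum_erase_eq_sum_subtype (fun i => b i * z i), hz0]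
      have : ∀ i : {i : Fin (n + 1) // i ≠ 0},
          b i.1 * z i.1 = b i.1 * y i - b i.1 ^ 2 * c := by
        intro i
        rw [hzi i.1 i.2]
        ring
      rw [Finset.sum_congr rfl fun i _ => this i, Finset.sum_sub_distrib, ← hS,
        ← Finset.sum_mul]
      have hub : (∑ i : {i : Fin (n + 1) // i ≠ 0}, b i.1 ^ 2) = u - 1 := by
        rw [husub]; ring
      rw [hub]
      linear_combination huc
    refine ⟨⟨z, hmem⟩, ?_⟩
    funext i
    show z i.1 + b i.1 * z 0 = y i
    rw [hzi i.1 i.2, hz0]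
    ring
  exact ⟨AddEquiv.ofBijective f ⟨hinj, hsurj⟩, fun x i => rfl⟩
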